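/- For θ ∈ (0, π/4) and every n ≥ 1, the coefficients p_{k,n}(θ) of L_n(z,F_θ) = Σ_{k=-n}^n p_{k,n}(θ) z^k satisfy: p_{k,n}(θ) = 0 when k ≢ n (mod 2) and |k| ≤ n-1, and p_{k,n}(θ) > 0 when k ≡ n (mod 2) and |k| ≤ n-1. -/

import Mathlib

open Matrix Complex Real

noncomputable def S (z : ℂ) (G : Matrix (Fin 2) (Fin 2) ℂ) : Matrix (Fin 2) (Fin 2) ℂ :=
  G * Matrix.diagonal ![z, z⁻¹] * Gᴴ

noncomputable def L (n : ℕ) (z : ℂ) (G : Matrix (Fin 2) (Fin 2) ℂ) : ℂ :=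
  ((S z G) ^ n).trace

noncomputable def Fmat (θ : ℝ) : Matrix (Fin 2) (Fin 2) ℂ :=
  !![(Real.cos θ : ℂ), (Real.sin θ : ℂ); (Real.sin θ : ℂ), (Real.cos θ : ℂ)]

noncomputable def Am (θ : ℝ) : Matrix (Fin 2) (Fin 2) ℝ :=
  !![Real.cos θ * Real.cos θ, Real.cos θ * Real.sin θ;
     Real.sin θ * Real.cos θ, Real.sin θ * Real.sin θ]

noncomputable def Bm (θ : ℝ) : Matrix (Fin 2) (Fin 2) ℝ :=
  !![Real.sin θ * Real.sin θ, Real.sin θ * Real.cos θ;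
     Real.cos θ * Real.sin θ, Real.cos θ * Real.cos θ]

noncomputable def Cm (θ : ℝ) : ℕ → ℤ → Matrix (Fin 2) (Fin 2) ℝ
  | 0, k => if k = 0 then 1 else 0
  | (n+1), k => Am θ * Cm θ n (k-1) + Bm θ * Cm θ n (k+1)

lemma Am_pos {θ : ℝ} (hθ : θ ∈ Set.Ioo (0:ℝ) (Real.pi/4)) : ∀ i j, 0 < Am θ i j := by
  obtain ⟨h1, h2⟩ := hθ
  have hc : 0 < Real.cos θ := Real.cos_pos_of_mem_Ioo
    ⟨by linarith [Real.pi_pos], by linarith [Real.pi_pos]⟩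
  have hs : 0 < Real.sin θ := Real.sin_pos_of_pos_of_lt_pi h1 (by linarith [Real.pi_pos])
  intro i j
  fin_cases i <;> fin_cases j <;> simp [Am] <;> positivity

lemma Bm_pos {θ : ℝ} (hθ : θ ∈ Set.Ioo (0:ℝ) (Real.pi/4)) : ∀ i j, 0 < Bm θ i j := by
  obtain ⟨h1, h2⟩ := hθ
  have hc : 0 < Real.cos θ := Real.cos_pos_of_mem_Ioo
    ⟨by linarith [Real.pi_pos], by linarith [Real.pi_pos]⟩
  have hs : 0 < Real.sin θ := Real.sin_pos_of_pos_of_lt_pi h1 (by linarith [Real.pi_pos])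
  intro i j
  fin_cases i <;> fin_cases j <;> simp [Bm] <;> positivity

lemma entry_mul_pos {A B : Matrix (Fin 2) (Fin 2) ℝ} (hA : ∀ i j, 0 < A i j)
    (hB : ∀ i j, 0 < B i j) : ∀ i j, 0 < (A * B) i j := by
  intro i j
  rw [Matrix.mul_apply, Fin.sum_univ_two]
  have := hA i 0; have := hA i 1; have := hB 0 j; have := hB 1 j
  nlinarith

lemma entry_mul_nonneg {A B : Matrix (Fin 2) (Fin 2) ℝ} (hA : ∀ i j, 0 ≤ A i j)
    (hB : ∀ i j, 0 ≤ B i j) : ∀ i j, 0 ≤ (A * B) i j := by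
  intro i j
  rw [Matrix.mul_apply, Fin.sum_univ_two]
  have := hA i 0; have := hA i 1; have := hB 0 j; have := hB 1 j
  nlinarith

lemma Cm_nonneg {θ : ℝ} (hθ : θ ∈ Set.Ioo (0:ℝ) (Real.pi/4)) :
    ∀ n (k : ℤ), ∀ i j, 0 ≤ Cm θ n k i j := by
  intro n
  induction n with
  | zero =>
    intro k i j
    by_cases h : k = 0 <;> simp [Cm, h] <;> fin_cases i <;> fin_cases j <;> simp [Matrix.one_apply]
  | succ n ih =>
    intro k i j
    have h1 := entry_mul_nonneg (fun i j => (Am_pos hθ i j).le) (ih (k-1)) i j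
    have h2 := entry_mul_nonneg (fun i j => (Bm_pos hθ i j).le) (ih (k+1)) i j
    simpa [Cm, Matrix.add_apply] using add_nonneg h1 h2

lemma Cm_zero {θ : ℝ} :
    ∀ (n : ℕ) (k : ℤ), ¬ ((k - n) % 2 = 0 ∧ -(n:ℤ) ≤ k ∧ k ≤ n) → Cm θ n k = 0 := by
  intro n
  induction n with
  | zero =>
    intro k hk
    have : k ≠ 0 := fun h => hk (by subst h; norm_num)
    simp [Cm, this]
  | succ n ih =>
    intro k hk
    push_cast at hk ⊢
    have h1 : Cm θ n (k-1) = 0 := ih (k-1) (by intro h; exact hk ⟨by omega, by omega, by omega⟩)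
    have h2 : Cm θ n (k+1) = 0 := ih (k+1) (by intro h; exact hk ⟨by omega, by omega, by omega⟩)
    simp [Cm, h1, h2]

lemma Cm_pos {θ : ℝ} (hθ : θ ∈ Set.Ioo (0:ℝ) (Real.pi/4)) :
    ∀ (n : ℕ), 1 ≤ n → ∀ (k : ℤ), (k - n) % 2 = 0 → -(n:ℤ) ≤ k → k ≤ n →
      ∀ i j, 0 < Cm θ n k i j := by
  intro n
  induction n with
  | zero => omega
  | succ n ih =>
    intro _ k hpar hlb hub i j
    rcases Nat.eq_zero_or_pos n with hn0 | hn1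
    · subst hn0
      push_cast at hpar hlb hub
      have hk : k = 1 ∨ k = -1 := by omega
      rcases hk with rfl | rfl
      · have h0 : Cm θ 0 (0:ℤ) = 1 := by simp [Cm]
        have h2 : Cm θ 0 (2:ℤ) = 0 := by simp [Cm]
        have : Cm θ 1 (1:ℤ) = Am θ := by
          show Am θ * Cm θ 0 (1-1) + Bm θ * Cm θ 0 (1+1) = Am θ
          norm_num [h0, h2]
        rw [this]; exact Am_pos hθ i j
      · have h0 : Cm θ 0 (0:ℤ) = 1 := by simp [Cm]
        have h2 : Cm θ 0 (-2:ℤ) = 0 := by simp [Cm]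
        have : Cm θ 1 (-1:ℤ) = Bm θ := by
          show Am θ * Cm θ 0 (-1-1) + Bm θ * Cm θ 0 (-1+1) = Bm θ
          norm_num [h0, h2]
        rw [this]; exact Bm_pos hθ i j
    · push_cast at hpar hlb hub
      have key : Cm θ (n+1) k i j
          = (Am θ * Cm θ n (k-1)) i j + (Bm θ * Cm θ n (k+1)) i j := by
        simp [Cm, Matrix.add_apply]
      rw [key]
      rcases le_or_gt 0 k with hk | hk
      · have hpos := entry_mul_pos (Am_pos hθ)
          (ih hn1 (k-1) (by omega) (by omega) (by omega)) i j
        have hnn := entry_mul_nonneg (fun i j => (Bm_pos hθ i j).le)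
          (Cm_nonneg hθ n (k+1)) i j
        linarith
      · have hpos := entry_mul_pos (Bm_pos hθ)
          (ih hn1 (k+1) (by omega) (by omega) (by omega)) i j
        have hnn := entry_mul_nonneg (fun i j => (Am_pos hθ i j).le)
          (Cm_nonneg hθ n (k-1)) i j
        linarith

lemma S_eq (θ : ℝ) (z : ℂ) :
    S z (Fmat θ) = z • (Am θ).map (fun x : ℝ => (x:ℂ))
      + z⁻¹ • (Bm θ).map (fun x : ℝ => (x:ℂ)) := by
  ext i j
  fin_cases i <;> fin_cases j <;>
    simp [S, Fmat, Am, Bm, Matrix.mul_apply, Fin.sum_univ_two,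
      Matrix.conjTranspose_apply, Matrix.diagonal_apply, Matrix.map_apply, Matrix.vecMul_diagonal,
      Complex.conj_ofReal, -Complex.ofReal_cos, -Complex.ofReal_sin] <;> push_cast <;> ring

lemma map_mul2 (A B : Matrix (Fin 2) (Fin 2) ℝ) :
    (A * B).map (fun x : ℝ => (x:ℂ)) = A.map (fun x : ℝ => (x:ℂ)) * B.map (fun x : ℝ => (x:ℂ)) := by
  ext i j
  simp [Matrix.mul_apply, Fin.sum_univ_two, Matrix.map_apply]

lemma map_add2 (A B : Matrix (Fin 2) (Fin 2) ℝ) :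
    (A + B).map (fun x : ℝ => (x:ℂ)) = A.map (fun x : ℝ => (x:ℂ)) + B.map (fun x : ℝ => (x:ℂ)) := by
  ext i j
  simp [Matrix.add_apply, Matrix.map_apply]

lemma Spow (θ : ℝ) {z : ℂ} (hz : z ≠ 0) :
    ∀ n : ℕ, (S z (Fmat θ)) ^ n
      = ∑ k ∈ Finset.Icc (-(n:ℤ)) (n:ℤ), z ^ k • (Cm θ n k).map (fun x : ℝ => (x:ℂ)) := by
  intro n
  induction n with
  | zero =>
    have h1 : Cm θ 0 (0:ℤ) = 1 := by simp [Cm]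
    simp only [Nat.cast_zero, neg_zero, Finset.Icc_self, Finset.sum_singleton, pow_zero,
      zpow_zero, one_smul, h1]
    rw [Matrix.map_one _ (by norm_num) (by norm_num)]
  | succ n ih =>
    set A' := (Am θ).map (fun x : ℝ => (x:ℂ)) with hA'
    set B' := (Bm θ).map (fun x : ℝ => (x:ℂ)) with hB'
    set M : ℤ → Matrix (Fin 2) (Fin 2) ℂ := fun k => (Cm θ n k).map (fun x : ℝ => (x:ℂ)) with hMdef
    have hM0 : ∀ j : ℤ, (j < -(n:ℤ) ∨ (n:ℤ) < j) → M j = 0 := by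
      intro j hj
      have h := Cm_zero (θ := θ) n j (by omega)
      ext i l
      simp [hMdef, h]
    have key1 : ∑ j ∈ Finset.Icc (-(n:ℤ)-1) ((n:ℤ)+1), z ^ j • (A' * M (j-1))
        = ∑ k ∈ Finset.Icc (-(n:ℤ)) (n:ℤ), z ^ (k+1) • (A' * M k) := by
      have h1 : (Finset.Icc (-(n:ℤ)-1) ((n:ℤ)+1))
          = Finset.map (addRightEmbedding 1) (Finset.Icc (-(n:ℤ)-2) (n:ℤ)) := by
        rw [Finset.map_add_right_Icc]; congr 1 <;> ring
      rw [h1, Finset.sum_map]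
      simp only [addRightEmbedding_apply, add_sub_cancel_right]
      symm
      apply Finset.sum_subset (Finset.Icc_subset_Icc (by omega) le_rfl)
      intro j hj hj2
      have : M j = 0 := by
        apply hM0
        simp only [Finset.mem_Icc] at hj hj2
        omega
      simp [this]
    have key2 : ∑ j ∈ Finset.Icc (-(n:ℤ)-1) ((n:ℤ)+1), z ^ j • (B' * M (j+1))
        = ∑ k ∈ Finset.Icc (-(n:ℤ)) (n:ℤ), z ^ (k-1) • (B' * M k) := by
      have h1 : (Finset.Icc (-(n:ℤ)-1) ((n:ℤ)+1))
          = Finset.map (addRightEmbedding (-1)) (Finset.Icc (-(n:ℤ)) ((n:ℤ)+2)) := by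
        rw [Finset.map_add_right_Icc]; congr 1 <;> ring
      rw [h1, Finset.sum_map]
      simp only [addRightEmbedding_apply, ← sub_eq_add_neg, sub_add_cancel]
      symm
      apply Finset.sum_subset (Finset.Icc_subset_Icc le_rfl (by omega))
      intro j hj hj2
      have : M j = 0 := by
        apply hM0
        simp only [Finset.mem_Icc] at hj hj2
        omega
      simp [this]
    have hpow : (S z (Fmat θ)) ^ (n+1) = (z • A' + z⁻¹ • B') * (S z (Fmat θ)) ^ n := by
      rw [pow_succ', S_eq]
    rw [hpow, ih, Finset.mul_sum]
    have hterm : ∀ k : ℤ,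
        (z • A' + z⁻¹ • B') * (z ^ k • M k)
          = z ^ (k+1) • (A' * M k) + z ^ (k-1) • (B' * M k) := by
      intro k
      rw [add_mul, smul_mul_assoc, smul_mul_assoc, mul_smul_comm, mul_smul_comm,
        smul_smul, smul_smul, zpow_add_one₀ hz, zpow_sub_one₀ hz]
      ring_nf
    change ∑ k ∈ _, (z • A' + z⁻¹ • B') * (z ^ k • M k) = _
    simp only [hterm]
    rw [Finset.sum_add_distrib, ← key1, ← key2, ← Finset.sum_add_distrib]
    have hrange : (-(((n:ℕ)+1:ℕ)):ℤ) = -(n:ℤ)-1 ∧ (((n:ℕ)+1:ℕ):ℤ) = (n:ℤ)+1 := by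
      constructor <;> push_cast <;> ring
    rw [hrange.1, hrange.2]
    apply Finset.sum_congr rfl
    intro j _
    rw [← smul_add]
    congr 1
    show A' * M (j-1) + B' * M (j+1) = (Cm θ (n+1) j).map (fun x : ℝ => (x:ℂ))
    show A' * M (j-1) + B' * M (j+1)
      = (Am θ * Cm θ n (j-1) + Bm θ * Cm θ n (j+1)).map (fun x : ℝ => (x:ℂ))
    rw [map_add2, map_mul2, map_mul2]

lemma trace_L (θ : ℝ) {z : ℂ} (hz : z ≠ 0) (n : ℕ) :
    L n z (Fmat θ)
      = ∑ k ∈ Finset.Icc (-(n:ℤ)) (n:ℤ), ((Cm θ n k 0 0 + Cm θ n k 1 1 : ℝ) : ℂ) * z ^ k := by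
  rw [L, Spow θ hz n, Matrix.trace_sum]
  apply Finset.sum_congr rfl
  intro k _
  rw [Matrix.trace_smul, Matrix.trace_fin_two, smul_eq_mul]
  simp only [Matrix.map_apply]
  push_cast
  ring

lemma coeff_unique (n : ℕ) (a : ℤ → ℂ)
    (h : ∀ z : ℂ, z ≠ 0 → ∑ k ∈ Finset.Icc (-(n:ℤ)) (n:ℤ), a k * z ^ k = 0) :
    ∀ k ∈ Finset.Icc (-(n:ℤ)) (n:ℤ), a k = 0 := by
  set P : Polynomial ℂ :=
    ∑ k ∈ Finset.Icc (-(n:ℤ)) (n:ℤ), Polynomial.monomial (k + n).toNat (a k) with hP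
  have hroot : ∀ z : ℂ, z ≠ 0 → P.IsRoot z := by
    intro z hz
    have he : P.eval z = ∑ k ∈ Finset.Icc (-(n:ℤ)) (n:ℤ), a k * z ^ ((k+(n:ℤ)).toNat) := by
      rw [hP, Polynomial.eval_finset_sum]
      apply Finset.sum_congr rfl
      intro k _
      rw [Polynomial.eval_monomial]
    rw [Polynomial.IsRoot, he]
    have h2 : ∀ k ∈ Finset.Icc (-(n:ℤ)) (n:ℤ),
        a k * z ^ ((k+(n:ℤ)).toNat) = (a k * z ^ k) * z ^ (n:ℤ) := by
      intro k hk
      simp only [Finset.mem_Icc] at hk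
      rw [← zpow_natCast z, Int.toNat_of_nonneg (by omega), zpow_add₀ hz]
      ring
    rw [Finset.sum_congr rfl h2, ← Finset.sum_mul, h z hz, zero_mul]
  have hP0 : P = 0 := by
    apply Polynomial.eq_zero_of_infinite_isRoot
    apply Set.Infinite.mono (s := ({(0:ℂ)}ᶜ : Set ℂ))
    · intro z hz
      exact hroot z hz
    · exact (Set.finite_singleton 0).infinite_compl
  intro k hk
  have hc : P.coeff (k + (n:ℤ)).toNat = a k := by
    rw [hP, Polynomial.finset_sum_coeff]
    have h3 : ∀ j ∈ Finset.Icc (-(n:ℤ)) (n:ℤ),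
        (Polynomial.monomial (j+(n:ℤ)).toNat (a j)).coeff (k+(n:ℤ)).toNat
          = if j = k then a j else 0 := by
      intro j hj
      rw [Polynomial.coeff_monomial]
      simp only [Finset.mem_Icc] at hj hk
      by_cases hjk : j = k
      · subst hjk; simp
      · rw [if_neg, if_neg hjk]
        intro hEq
        exact hjk (by omega)
    rw [Finset.sum_congr rfl h3, Finset.sum_ite_eq', if_pos hk]
  rw [hP0] at hc
  simpa using hc.symm

theorem stmt11 (θ : ℝ) (hθ : θ ∈ Set.Ioo (0 : ℝ) (Real.pi / 4)) (n : ℕ) (hn : 1 ≤ n)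
    (p : ℤ → ℝ)
    (hp : ∀ z : ℂ, z ≠ 0 →
      L n z (Fmat θ) = ∑ k ∈ Finset.Icc (-(n : ℤ)) (n : ℤ), (p k : ℂ) * z ^ k) :
    ∀ k : ℤ, |k| ≤ (n : ℤ) - 1 →
      (¬ (k % 2 = (n : ℤ) % 2) → p k = 0) ∧ ((k % 2 = (n : ℤ) % 2) → 0 < p k) := by
  intro k hk
  obtain ⟨hk1, hk2⟩ := abs_le.mp hk
  have hkmem : k ∈ Finset.Icc (-(n:ℤ)) (n:ℤ) := Finset.mem_Icc.mpr ⟨by omega, by omega⟩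
  set q : ℤ → ℝ := fun j => Cm θ n j 0 0 + Cm θ n j 1 1 with hq
  have huniq : ∀ j ∈ Finset.Icc (-(n:ℤ)) (n:ℤ), ((p j : ℂ) - (q j : ℂ)) = 0 := by
    apply coeff_unique
    intro z hz
    have h1 := hp z hz
    have h2 := trace_L θ hz n
    simp only [sub_mul]
    rw [Finset.sum_sub_distrib, ← h1, ← h2, sub_self]
  have hpq : p k = q k := by
    have := huniq k hkmem
    have : (p k : ℂ) = (q k : ℂ) := by linear_combination this
    exact_mod_cast this
  constructor
  · intro hpar
    have hz : Cm θ n k = 0 := by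
      apply Cm_zero
      rintro ⟨h1, h2, h3⟩
      exact hpar (by omega)
    rw [hpq, hq]
    simp [hz]
  · intro hpar
    have h00 := Cm_pos hθ n hn k (by omega) (by omega) (by omega) 0 0
    have h11 := Cm_pos hθ n hn k (by omega) (by omega) (by omega) 1 1
    rw [hpq]
    exact add_pos h00 h11
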